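/- Let f : ℝⁿ → ℝ be convex with block-coordinatewise Lipschitz continuous gradient, and let z ∈ ℝⁿ, z ≠ 0, with ∇f(z) ≠ 0. Then z is a local minimizer of F(x) = f(x) + ‖x‖_{0,λ} on the open ball B_∞(z, r), where r = min{ \underline{z}, \underline{λ}/‖∇f(z)‖₁ }, if and only if z is a global minimizer of the convex problem min_{x ∈ S_{I(z)}} f(x), i.e. if and only if ∇_{(j)} f(z) = 0 for every j ∈ I(z). -/

import Mathlib

open scoped RealInnerProductSpace
open Finset

/-- The weighted ℓ₀ quasinorm `‖x‖_{0,λ} = ∑ᵢ λᵢ ‖xᵢ‖₀`, where the blocks are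
given by the assignment `blk : Fin n → Fin N` of coordinates to blocks. -/
noncomputable def l0norm {n N : ℕ} (blk : Fin n → Fin N) (lam : Fin N → ℝ)
    (x : EuclideanSpace ℝ (Fin n)) : ℝ :=
  ∑ j, if x j ≠ 0 then lam (blk j) else 0

/-- The index set `I(x) = supp(x) ∪ {j : j ∈ 𝒮ᵢ, λᵢ = 0}`, as a predicate. -/
def InIset {n N : ℕ} (blk : Fin n → Fin N) (lam : Fin N → ℝ)
    (x : EuclideanSpace ℝ (Fin n)) (j : Fin n) : Prop :=
  x j ≠ 0 ∨ lam (blk j) = 0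

/-- The block restriction `xᵢ = Uᵢᵀ x`, viewed as the vector of coordinates in block `i`. -/
noncomputable def blkProj {n N : ℕ} (blk : Fin n → Fin N) (i : Fin N)
    (x : EuclideanSpace ℝ (Fin n)) : EuclideanSpace ℝ {j : Fin n // blk j = i} :=
  WithLp.toLp 2 (fun j => x j.1)

/-- The block embedding `Uᵢ hᵢ` of a block vector into `ℝⁿ`. -/
noncomputable def blkEmbed {n N : ℕ} (blk : Fin n → Fin N) (i : Fin N)
    (v : EuclideanSpace ℝ {j : Fin n // blk j = i}) : EuclideanSpace ℝ (Fin n) :=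
  WithLp.toLp 2 (fun j => if h : blk j = i then v ⟨j, h⟩ else 0)

section Aux

variable {E : Type*} [NormedAddCommGroup E] [InnerProductSpace ℝ E] [CompleteSpace E]

/-- Directional derivative along a line, from a gradient. -/
lemma hasDerivAt_line (f : E → ℝ) (G : E) (x v : E) (hf : HasGradientAt f G x) :
    HasDerivAt (fun t : ℝ => f (x + t • v)) ⟪G, v⟫ 0 := by
  have hc : HasDerivAt (fun t : ℝ => x + t • v) v (0 : ℝ) := by
    simpa using ((hasDerivAt_id (0 : ℝ)).smul_const v).const_add x
  have hF : HasFDerivAt f (InnerProductSpace.toDual ℝ E G) ((fun t : ℝ => x + t • v) 0) := by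
    simpa using hf.hasFDerivAt
  simpa [Function.comp_def, InnerProductSpace.toDual_apply_apply] using hF.comp_hasDerivAt (0 : ℝ) hc

/-- The gradient inequality for convex functions. -/
lemma convexOn_grad_ineq (f : E → ℝ) (hconv : ConvexOn ℝ Set.univ f) (G x y : E)
    (hf : HasGradientAt f G x) : f x + ⟪G, y - x⟫ ≤ f y := by
  have hd := hasDerivAt_line f G x (y - x) hf
  have hsub : Set.Ioi (0 : ℝ) ⊆ {(0 : ℝ)}ᶜ := fun t ht => ne_of_gt ht
  have htend : Filter.Tendsto (slope (fun t : ℝ => f (x + t • (y - x))) 0)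
      (nhdsWithin 0 (Set.Ioi (0 : ℝ))) (nhds ⟪G, y - x⟫) :=
    (hasDerivAt_iff_tendsto_slope.mp hd).mono_left (nhdsWithin_mono 0 hsub)
  have hbound : ∀ᶠ t in nhdsWithin 0 (Set.Ioi (0 : ℝ)),
      slope (fun t : ℝ => f (x + t • (y - x))) 0 t ≤ f y - f x := by
    filter_upwards [self_mem_nhdsWithin, Ioo_mem_nhdsGT (by norm_num : (0:ℝ) < 1)]
      with t ht ht1
    have ht0 : (0 : ℝ) < t := ht
    have htlt1 : t < 1 := ht1.2
    have hcx : f (x + t • (y - x)) ≤ (1 - t) * f x + t * f y := by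
      have := hconv.2 (Set.mem_univ x) (Set.mem_univ y)
        (by linarith : (0:ℝ) ≤ 1 - t) (le_of_lt ht0) (by ring)
      have hxy : (1 - t) • x + t • y = x + t • (y - x) := by
        rw [smul_sub, sub_smul, one_smul]; abel
      rw [hxy] at this
      simpa using this
    rw [slope_def_field]
    rw [div_le_iff₀ (by linarith : (0:ℝ) < t - 0)]
    have h0 : f (x + (0:ℝ) • (y - x)) = f x := by simp
    rw [h0]
    nlinarith
  have := le_of_tendsto htend hbound
  linarith

end Aux

/-- For `f` convex with block-coordinatewise Lipschitz gradient, `z ≠ 0`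
with `∇f(z) ≠ 0`, `z` is a local minimizer of `F = f + ‖·‖_{0,λ}` on the open `ℓ∞`-ball of
radius `r = min{ \underline z, \underline λ / ‖∇f(z)‖₁ }` centered at `z` if and only if
`∇_{(j)} f(z) = 0` for every `j ∈ I(z)`. -/
theorem statement0 {n N : ℕ} (blk : Fin n → Fin N) (lam : Fin N → ℝ)
    (hlam : ∀ i, 0 ≤ lam i) (hlam_pos : ∃ i, 0 < lam i)
    (f : EuclideanSpace ℝ (Fin n) → ℝ)
    (g : EuclideanSpace ℝ (Fin n) → EuclideanSpace ℝ (Fin n))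
    (hconv : ConvexOn ℝ Set.univ f)
    (hgrad : ∀ x, HasGradientAt f (g x) x)
    (L : Fin N → ℝ) (hL : ∀ i, 0 < L i)
    (hLip : ∀ (i : Fin N) (x : EuclideanSpace ℝ (Fin n))
      (h : EuclideanSpace ℝ {j : Fin n // blk j = i}),
      ‖blkProj blk i (g (x + blkEmbed blk i h)) - blkProj blk i (g x)‖ ≤ L i * ‖h‖)
    (z : EuclideanSpace ℝ (Fin n)) (hz : z ≠ 0) (hgz : g z ≠ 0)
    (r : ℝ)
    (hr : r = min (sInf {t : ℝ | ∃ j, z j ≠ 0 ∧ t = |z j|})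
      (sInf {t : ℝ | ∃ i, 0 < lam i ∧ t = lam i} / ∑ j, |g z j|)) :
    (∀ y : EuclideanSpace ℝ (Fin n), (∀ j, |y j - z j| < r) →
        f z + l0norm blk lam z ≤ f y + l0norm blk lam y)
      ↔ (∀ j, InIset blk lam z j → g z j = 0) := by
  classical
  set A : Set ℝ := {t : ℝ | ∃ j, z j ≠ 0 ∧ t = |z j|} with hAdef
  set B : Set ℝ := {t : ℝ | ∃ i, 0 < lam i ∧ t = lam i} with hBdef
  set S : ℝ := ∑ j, |g z j| with hSdef
  -- basic nonvanishing
  have hzj : ∃ j, z j ≠ 0 := by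
    by_contra h
    push_neg at h
    exact hz (PiLp.ext fun j => by simp [h j])
  have hgzj : ∃ j, g z j ≠ 0 := by
    by_contra h
    push_neg at h
    exact hgz (PiLp.ext fun j => by simp [h j])
  obtain ⟨j₀, hj₀⟩ := hzj
  obtain ⟨k₀, hk₀⟩ := hgzj
  have hAfin : A.Finite := by
    apply (Set.finite_range fun j => |z j|).subset
    rintro t ⟨j, _, rfl⟩
    exact ⟨j, rfl⟩
  have hAne : A.Nonempty := ⟨|z j₀|, j₀, hj₀, rfl⟩
  have hBfin : B.Finite := by
    apply (Set.finite_range fun i => lam i).subset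
    rintro t ⟨i, _, rfl⟩
    exact ⟨i, rfl⟩
  have hBne : B.Nonempty := by
    obtain ⟨i, hi⟩ := hlam_pos
    exact ⟨lam i, i, hi, rfl⟩
  have hApos : 0 < sInf A := by
    obtain ⟨j, hj, hEq⟩ := hAne.csInf_mem hAfin
    rw [hEq]
    exact abs_pos.mpr hj
  have hBpos : 0 < sInf B := by
    obtain ⟨i, hi, hEq⟩ := hBne.csInf_mem hBfin
    rw [hEq]; exact hi
  have hAle : ∀ j, z j ≠ 0 → sInf A ≤ |z j| := fun j hj =>
    csInf_le hAfin.bddBelow ⟨j, hj, rfl⟩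
  have hBle : ∀ i, 0 < lam i → sInf B ≤ lam i := fun i hi =>
    csInf_le hBfin.bddBelow ⟨i, hi, rfl⟩
  have hSpos : 0 < S := by
    apply Finset.sum_pos' (fun i _ => abs_nonneg _)
    exact ⟨k₀, Finset.mem_univ k₀, abs_pos.mpr hk₀⟩
  have hrpos : 0 < r := by
    rw [hr]; exact lt_min hApos (div_pos hBpos hSpos)
  have hrA : r ≤ sInf A := by rw [hr]; exact min_le_left _ _
  have hrB : r * S ≤ sInf B := by
    have : r ≤ sInf B / S := by rw [hr]; exact min_le_right _ _
    calc r * S ≤ (sInf B / S) * S := by nlinarith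
    _ = sInf B := by field_simp
  have hgr : ∀ j, |g z j| * r ≤ sInf B := by
    intro j
    have h1 : |g z j| ≤ S := Finset.single_le_sum (fun i _ => abs_nonneg (g z i))
      (Finset.mem_univ j)
    nlinarith
  -- points with z j ≠ 0 stay nonzero in the ball
  have hball_ne : ∀ y : EuclideanSpace ℝ (Fin n), (∀ j, |y j - z j| < r) →
      ∀ j, z j ≠ 0 → y j ≠ 0 := by
    intro y hy j hj hyj
    have h1 := hy j
    rw [hyj] at h1
    have h2 : |z j| < r := by simpa using h1
    have h3 := hAle j hj
    linarith
  -- inner product as a sum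
  have hinner : ∀ y : EuclideanSpace ℝ (Fin n),
      ⟪g z, y - z⟫ = ∑ j, g z j * (y j - z j) := by
    intro y
    rw [PiLp.inner_apply]
    apply Finset.sum_congr rfl
    intro j _
    simp [RCLike.inner_apply]; ring
  constructor
  · -- local minimizer ⇒ gradient vanishes on I(z)
    intro hloc j hj
    by_contra hgj
    set v : EuclideanSpace ℝ (Fin n) := EuclideanSpace.single j (-(g z j)) with hvdef
    have hiv : ⟪g z, v⟫ = -(g z j * g z j) := by
      rw [hvdef, EuclideanSpace.inner_single_right]
      simp [mul_comm]
    have hneg : ⟪g z, v⟫ < 0 := by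
      rw [hiv]
      have := mul_self_pos.mpr hgj
      linarith
    have hd := hasDerivAt_line f (g z) z v (hgrad z)
    have hsub : Set.Ioi (0 : ℝ) ⊆ {(0 : ℝ)}ᶜ := fun t ht => ne_of_gt ht
    have htend : Filter.Tendsto (slope (fun t : ℝ => f (z + t • v)) 0)
        (nhdsWithin 0 (Set.Ioi (0 : ℝ))) (nhds ⟪g z, v⟫) :=
      (hasDerivAt_iff_tendsto_slope.mp hd).mono_left (nhdsWithin_mono 0 hsub)
    have h1 : ∀ᶠ t in nhdsWithin 0 (Set.Ioi (0 : ℝ)),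
        slope (fun t : ℝ => f (z + t • v)) 0 t < 0 :=
      htend.eventually_lt_const hneg
    have hgjpos : 0 < |g z j| := abs_pos.mpr hgj
    have h2 : Set.Ioo (0 : ℝ) (r / |g z j|) ∈ nhdsWithin 0 (Set.Ioi (0 : ℝ)) :=
      Ioo_mem_nhdsGT (div_pos hrpos hgjpos)
    obtain ⟨t, hslope, htIoo⟩ := (h1.and (Filter.eventually_mem_set.mpr h2)).exists
    have ht0 : 0 < t := htIoo.1
    have htr : t * |g z j| < r := by
      rw [← lt_div_iff₀ hgjpos]
      exact htIoo.2
    set y : EuclideanSpace ℝ (Fin n) := z + t • v with hydef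
    have hyapp : ∀ k, y k = z k + t * (if k = j then -(g z j) else 0) := by
      intro k
      rw [hydef]
      simp [hvdef, EuclideanSpace.single_apply]
    have hyz : ∀ k, |y k - z k| < r := by
      intro k
      rw [hyapp k]
      by_cases hk : k = j
      · subst hk
        rw [if_pos rfl, show z k + t * -(g z k) - z k = -(t * g z k) by ring, abs_neg, abs_mul,
          abs_of_pos ht0]
        exact htr
      · simp [hk, hrpos]
    -- f y < f z
    have hflt : f y < f z := by
      have := hslope
      rw [slope_def_field, div_neg_iff] at this
      rcases this with ⟨hnum, hden⟩ | ⟨hnum, hden⟩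
      · linarith
      · have h0 : f (z + (0:ℝ) • v) = f z := by simp
        have : f (z + t • v) < f z := by
          have hnum' := hnum
          rw [h0] at hnum'
          linarith
        exact this
    -- l0norm unchanged
    have hyj_ne : z j ≠ 0 → y j ≠ 0 := hball_ne y hyz j
    have hl0 : l0norm blk lam y = l0norm blk lam z := by
      unfold l0norm
      apply Finset.sum_congr rfl
      intro k _
      by_cases hk : k = j
      · subst hk
        rcases hj with hzk | hlk
        · rw [if_pos (hyj_ne hzk), if_pos hzk]
        · rw [hlk]
          simp
      · have : y k = z k := by rw [hyapp k]; simp [hk]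
        rw [this]
    have := hloc y hyz
    rw [hl0] at this
    linarith
  · -- gradient vanishes on I(z) ⇒ local minimizer
    intro hI y hy
    have hgi := convexOn_grad_ineq f hconv (g z) z y (hgrad z)
    rw [hinner y] at hgi
    have hkey : l0norm blk lam z ≤
        (∑ j, g z j * (y j - z j)) + l0norm blk lam y := by
      unfold l0norm
      rw [← Finset.sum_add_distrib]
      apply Finset.sum_le_sum
      intro j _
      by_cases hzj : z j ≠ 0
      · have hg0 : g z j = 0 := hI j (Or.inl hzj)
        have hy0 : y j ≠ 0 := hball_ne y hy j hzj
        rw [if_pos hzj, if_pos hy0, hg0]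
        ring_nf
        exact le_refl _
      · push_neg at hzj
        rw [if_neg (by simp [hzj])]
        by_cases hlj : lam (blk j) = 0
        · have hg0 : g z j = 0 := hI j (Or.inr hlj)
          rw [hg0, hlj]
          simp
        · have hlpos : 0 < lam (blk j) := (hlam (blk j)).lt_of_ne (Ne.symm hlj)
          by_cases hyj : y j = 0
          · rw [hyj, hzj]
            simp
          · rw [if_pos hyj, hzj, sub_zero]
            have h1 : |g z j| * r ≤ sInf B := hgr j
            have h2 : sInf B ≤ lam (blk j) := hBle (blk j) hlpos
            have h3 : |y j| < r := by
              have := hy j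
              rwa [hzj, sub_zero] at this
            have h4 : -(|g z j| * |y j|) ≤ g z j * y j := by
              rw [← abs_mul]
              exact neg_abs_le _
            have h5 : |g z j| * |y j| ≤ |g z j| * r :=
              mul_le_mul_of_nonneg_left (le_of_lt h3) (abs_nonneg _)
            linarith
    linarith
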